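/- arXiv:1609.01245 — 2 statements merged into one kernel-verified Lean document; each statement's English description precedes it below -/
import Mathlib

section
/- For every real number a ≥ 1, if x₀ = x₀(a) denotes the unique positive solution of (1+x)^a · x = 1, then a · x₀(a) ≥ (√5 − 1)/2. In particular, 1/x₀(a) ≤ ((√5 + 1)/2) · a. -/
private lemma key_mono (g : ℝ) (hg0 : 0 < g) (hg1 : g ≤ 1) (a : ℝ) (ha : 1 ≤ a) :
    a * (Real.log (a + g) - Real.log a) ≤ Real.log a + Real.log (1 + g) := by
  set F : ℝ → ℝ := fun x => Real.log x + Real.log (1 + g) -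
      x * (Real.log (x + g) - Real.log x) with hF
  have hderiv : ∀ x : ℝ, 0 < x →
      HasDerivAt F (x⁻¹ - ((Real.log (x + g) - Real.log x) + x * ((x + g)⁻¹ - x⁻¹))) x := by
    intro x hx
    have h1 : HasDerivAt Real.log x⁻¹ x := Real.hasDerivAt_log (ne_of_gt hx)
    have h2 : HasDerivAt (fun y : ℝ => Real.log (y + g)) ((x + g)⁻¹) x := by
      have hadd : HasDerivAt (fun y : ℝ => y + g) 1 x := (hasDerivAt_id x).add_const g
      have := (Real.hasDerivAt_log (ne_of_gt (by linarith : (0:ℝ) < x + g))).comp x hadd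
      simpa [Function.comp_def] using this
    have hprod : HasDerivAt (fun y : ℝ => y * (Real.log (y + g) - Real.log y))
        (1 * (Real.log (x + g) - Real.log x) + x * ((x + g)⁻¹ - x⁻¹)) x :=
      (hasDerivAt_id x).mul (h2.sub h1)
    have hsum := (h1.add_const (Real.log (1 + g))).sub hprod
    simpa [hF, one_mul, Pi.sub_def] using hsum
  have hmono : MonotoneOn F (Set.Ici 1) := by
    have hint : interior (Set.Ici (1:ℝ)) = Set.Ioi 1 := interior_Ici
    apply monotoneOn_of_deriv_nonneg (convex_Ici 1)
    · intro x hx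
      have hx0 : (0:ℝ) < x := lt_of_lt_of_le one_pos hx
      exact (hderiv x hx0).continuousAt.continuousWithinAt
    · intro x hx
      rw [hint] at hx
      have hx0 : (0:ℝ) < x := lt_trans one_pos hx
      exact ((hderiv x hx0).differentiableAt).differentiableWithinAt
    · intro x hx
      rw [hint] at hx
      have hx1 : (1:ℝ) < x := hx
      have hx0 : (0:ℝ) < x := lt_trans one_pos hx1
      rw [(hderiv x hx0).deriv]
      have hxg0 : (0:ℝ) < x + g := by linarith
      have hlog : Real.log (x + g) - Real.log x ≤ g / x := by
        have hpos : (0:ℝ) < (x + g) / x := by positivity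
        have h := Real.log_le_sub_one_of_pos hpos
        rw [Real.log_div (by linarith) (ne_of_gt hx0)] at h
        have hxg : (x + g) / x - 1 = g / x := by field_simp; ring
        linarith
      have h1 : x * ((x + g)⁻¹ - x⁻¹) = x / (x + g) - 1 := by field_simp
      have h2 : x / (x + g) ≤ 1 := by rw [div_le_one hxg0]; linarith
      have h3 : g / x ≤ x⁻¹ := by
        rw [inv_eq_one_div]
        gcongr
      linarith
  have hF1 : F 1 = 0 := by simp [hF]
  have := hmono (Set.self_mem_Ici) (Set.mem_Ici.mpr ha) ha
  rw [hF1] at this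
  have : 0 ≤ Real.log a + Real.log (1 + g) - a * (Real.log (a + g) - Real.log a) := this
  linarith

private lemma rpow_bound (g : ℝ) (hg0 : 0 < g) (hg1 : g ≤ 1) (a : ℝ) (ha : 1 ≤ a) :
    (1 + g / a) ^ a ≤ a * (1 + g) := by
  have ha0 : (0:ℝ) < a := lt_of_lt_of_le one_pos ha
  have hbase : 1 + g / a = (a + g) / a := by field_simp
  have hpos : (0:ℝ) < (a + g) / a := by positivity
  rw [hbase, Real.rpow_def_of_pos hpos]
  have hlogdiv : Real.log ((a + g) / a) = Real.log (a + g) - Real.log a :=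
    Real.log_div (by positivity) (ne_of_gt ha0)
  rw [hlogdiv, mul_comm]
  have hkey := key_mono g hg0 hg1 a ha
  have hmul : Real.log a + Real.log (1 + g) = Real.log (a * (1 + g)) :=
    (Real.log_mul (ne_of_gt ha0) (by positivity)).symm
  calc Real.exp (a * (Real.log (a + g) - Real.log a))
      ≤ Real.exp (Real.log (a * (1 + g))) := by
        apply Real.exp_le_exp.mpr
        rw [← hmul]; exact hkey
    _ = a * (1 + g) := Real.exp_log (by positivity)

/-- For `a ≥ 1`, if `x₀` is the positive solution of `(1+x)^a · x = 1`, then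
`a·x₀ ≥ (√5 − 1)/2`; in particular `1/x₀ ≤ ((√5 + 1)/2)·a`. -/
theorem ax0_lower_bound (a : ℝ) (ha : 1 ≤ a) (x₀ : ℝ) (hx₀ : 0 < x₀)
    (hfx₀ : (1 + x₀) ^ a * x₀ = 1) :
    (Real.sqrt 5 - 1) / 2 ≤ a * x₀ ∧ 1 / x₀ ≤ (Real.sqrt 5 + 1) / 2 * a := by
  set g : ℝ := (Real.sqrt 5 - 1) / 2 with hg
  have h5 : Real.sqrt 5 ^ 2 = 5 := Real.sq_sqrt (by norm_num)
  have hs2 : (2:ℝ) < Real.sqrt 5 := by nlinarith [Real.sqrt_nonneg 5]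
  have hs3 : Real.sqrt 5 < 3 := by nlinarith [Real.sqrt_nonneg 5]
  have hg0 : 0 < g := by rw [hg]; linarith
  have hg1 : g ≤ 1 := by rw [hg]; linarith
  have hgg : g * (1 + g) = 1 := by rw [hg]; nlinarith
  have ha0 : (0:ℝ) < a := lt_of_lt_of_le one_pos ha
  have hb := rpow_bound g hg0 hg1 a ha
  -- show g / a ≤ x₀
  have hga : g / a ≤ x₀ := by
    by_contra hcon
    push_neg at hcon
    have hle : (1 + x₀) ^ a ≤ (1 + g / a) ^ a :=
      Real.rpow_le_rpow (by linarith) (by linarith) (by linarith)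
    have hlt : (1 + x₀) ^ a * x₀ < (1 + g / a) ^ a * (g / a) :=
      mul_lt_mul' hle hcon (le_of_lt hx₀) (by positivity)
    have hfin : (1 + g / a) ^ a * (g / a) ≤ 1 := by
      have h1 : (1 + g / a) ^ a * (g / a) ≤ (a * (1 + g)) * (g / a) := by
        apply mul_le_mul_of_nonneg_right hb (by positivity)
      have h2 : (a * (1 + g)) * (g / a) = g * (1 + g) := by field_simp
      rw [h2, hgg] at h1
      exact h1
    rw [hfx₀] at hlt
    linarith
  constructor
  · have : g ≤ a * x₀ := by
      rw [div_le_iff₀ ha0] at hga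
      linarith [hga]
    rw [hg] at this
    exact this
  · have hga0 : (0:ℝ) < g / a := by positivity
    have h1 : 1 / x₀ ≤ 1 / (g / a) := one_div_le_one_div_of_le hga0 hga
    have h2 : 1 / (g / a) = a / g := one_div_div g a
    have h3 : a / g = (1 + g) * a := by
      rw [div_eq_iff (ne_of_gt hg0)]
      nlinarith
    have h4 : (Real.sqrt 5 + 1) / 2 * a = (1 + g) * a := by rw [hg]; ring
    rw [h4]
    linarith [h1, h2 ▸ h1]
end

section
/- The function g : (0,1) → ℝ defined by g(x) = −x · log(x) / log(1+x) is positive and strictly decreasing on the interval (0,1). -/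
open Real Set

private lemma g_hasDerivAt {x : ℝ} (hx : x ∈ Set.Ioo (0:ℝ) 1) :
    HasDerivAt (fun x : ℝ => -x * Real.log x / Real.log (1 + x))
      (((-Real.log x - 1) * Real.log (1 + x) - (-x * Real.log x) * (1 / (1 + x))) /
        (Real.log (1 + x)) ^ 2) x := by
  obtain ⟨hx0, hx1⟩ := hx
  have h1x : (0:ℝ) < 1 + x := by linarith
  have hlog1x : 0 < Real.log (1 + x) := Real.log_pos (by linarith)
  have h1 : HasDerivAt (fun x : ℝ => -x * Real.log x) (-Real.log x - 1) x := by
    have := ((hasDerivAt_id x).neg.mul (Real.hasDerivAt_log hx0.ne'))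
    convert this using 1
    · rfl
    · rfl
    · rfl
    simp only [Pi.neg_apply, id]
    field_simp
    ring
  have h2 : HasDerivAt (fun x : ℝ => Real.log (1 + x)) (1 / (1 + x)) x := by
    have := (HasDerivAt.const_add 1 (hasDerivAt_id x)).log h1x.ne'
    convert this using 1
    · rfl
    · rfl
  exact h1.div h2 hlog1x.ne'

/-- The function `g(x) = −x·log(x)/log(1+x)` is positive and strictly
decreasing on `(0,1)`. -/
theorem g_pos_strictAnti :
    (∀ x ∈ Set.Ioo (0 : ℝ) 1, 0 < -x * Real.log x / Real.log (1 + x)) ∧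
    StrictAntiOn (fun x : ℝ => -x * Real.log x / Real.log (1 + x)) (Set.Ioo 0 1) := by
  constructor
  · intro x ⟨hx0, hx1⟩
    have hlx : Real.log x < 0 := Real.log_neg hx0 hx1
    have hl1x : 0 < Real.log (1 + x) := Real.log_pos (by linarith)
    apply div_pos _ hl1x
    nlinarith
  · apply strictAntiOn_of_deriv_neg (convex_Ioo 0 1)
    · exact fun x hx => ((g_hasDerivAt hx).continuousAt).continuousWithinAt
    · intro x hx
      rw [interior_Ioo] at hx
      rw [(g_hasDerivAt hx).deriv]
      obtain ⟨hx0, hx1⟩ := hx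
      have h1x : (0:ℝ) < 1 + x := by linarith
      have hlx : Real.log x < 0 := Real.log_neg hx0 hx1
      have hl1x : 0 < Real.log (1 + x) := Real.log_pos (by linarith)
      apply div_neg_of_neg_of_pos _ (by positivity)
      -- key inequalities
      have hM : Real.log (1 + x) ≤ x := by
        have := Real.log_le_sub_one_of_pos h1x
        linarith
      have hL : x - 1 ≤ x * Real.log x := by
        have h := Real.log_le_sub_one_of_pos (show (0:ℝ) < 1/x by positivity)
        rw [Real.log_div one_ne_zero hx0.ne', Real.log_one] at h
        have h2 : -Real.log x ≤ 1 / x - 1 := by linarith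
        have h3 : x * (-Real.log x) ≤ x * (1 / x - 1) :=
          mul_le_mul_of_nonneg_left h2 hx0.le
        have h4 : x * (1 / x - 1) = 1 - x := by field_simp
        nlinarith
      rw [div_eq_inv_mul]
      have hinv : (0:ℝ) < (1 + x)⁻¹ := by positivity
      -- goal: (-log x - 1) * log(1+x) - (-x * log x) * ((1+x)⁻¹ * 1) < 0
      rcases le_or_gt (-Real.log x - 1) 0 with hc | hc
      · have t1 : (-Real.log x - 1) * Real.log (1 + x) ≤ 0 :=
          mul_nonpos_of_nonpos_of_nonneg hc hl1x.le
        have t2 : 0 < (- x * Real.log x) * ((1 + x)⁻¹ * 1) := by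
          have h5 : 0 < -x * Real.log x := by nlinarith
          positivity
        linarith
      · have t1 : (-Real.log x - 1) * Real.log (1 + x) ≤ (-Real.log x - 1) * x :=
          mul_le_mul_of_nonneg_left hM hc.le
        have t2 : (-Real.log x - 1) * x - (-x * Real.log x) * ((1 + x)⁻¹ * 1) < 0 := by
          rw [mul_one, ← div_eq_mul_inv, sub_neg, lt_div_iff₀ h1x]
          nlinarith
        linarith
end
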